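/- Let ℓ: ℝ → ℝ be a differentiable strictly convex gradient-symmetric function. For any y ∈ {−1,+1} and any functions f_1,…,f_M: each real, with f̄ = (1/M)∑ f_i, we have ℓ(y·f̄) = (1/M)∑_i ℓ(y·f_i) − (1/M)∑_i B_ℓ(f_i, f̄). -/

import Mathlib

lemma grad_sym_val (ℓ : ℝ → ℝ) (hd : Differentiable ℝ ℓ)
    (c : ℝ) (hgs : ∀ v : ℝ, deriv ℓ v + deriv ℓ (-v) = c) :
    ∀ v : ℝ, ℓ (-v) = ℓ v - c * v := by
  set g : ℝ → ℝ := fun v => ℓ v - ℓ (-v) - c * v with hg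
  have hdg : Differentiable ℝ g := by
    apply Differentiable.sub
    · exact hd.sub (hd.comp differentiable_neg)
    · exact (differentiable_id.const_mul c)
  have hderiv : ∀ v, deriv g v = 0 := by
    intro v
    have h1 : HasDerivAt ℓ (deriv ℓ v) v := (hd v).hasDerivAt
    have h2 : HasDerivAt (fun x : ℝ => ℓ (-x)) (deriv ℓ (-v) * (-1)) v :=
      ((hd (-v)).hasDerivAt).comp v (hasDerivAt_neg v)
    have h3 : HasDerivAt (fun x : ℝ => c * x) c v := by
      simpa using (hasDerivAt_id v).const_mul c
    have : HasDerivAt g (deriv ℓ v - deriv ℓ (-v) * (-1) - c) v :=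
      (h1.sub h2).sub h3
    rw [this.deriv]
    have := hgs v
    linarith
  intro v
  have hconst : g v = g 0 := is_const_of_deriv_eq_zero hdg hderiv v 0
  simp [hg] at hconst
  linarith [hconst]

/-- Ambiguity decomposition for gradient-symmetric losses. -/
theorem stmt7 (ℓ : ℝ → ℝ) (hd : Differentiable ℝ ℓ) (hconv : StrictConvexOn ℝ Set.univ ℓ)
    (c : ℝ) (hgs : ∀ v : ℝ, deriv ℓ v + deriv ℓ (-v) = c)
    (y : ℝ) (hy : y = -1 ∨ y = 1) (M : ℕ) (hM : 1 ≤ M) (f : Fin M → ℝ) :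
    ℓ (y * ((∑ i, f i) / M)) =
      (∑ i, ℓ (y * f i)) / M -
        (∑ i, (ℓ (f i) - ℓ ((∑ j, f j) / M)
          - deriv ℓ ((∑ j, f j) / M) * (f i - (∑ j, f j) / M))) / M := by
  have hM0 : (M : ℝ) ≠ 0 := Nat.cast_ne_zero.mpr (by omega)
  set m : ℝ := (∑ j, f j) / M with hm
  have hSm : (∑ j, f j) = M * m := by rw [hm]; field_simp
  have hcard : (Finset.univ : Finset (Fin M)).card = M := by simp
  have hBsum : (∑ i, (ℓ (f i) - ℓ m - deriv ℓ m * (f i - m)))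
      = (∑ i, ℓ (f i)) - M * ℓ m := by
    rw [Finset.sum_sub_distrib, Finset.sum_sub_distrib]
    rw [Finset.sum_const, hcard, ← Finset.mul_sum, Finset.sum_sub_distrib,
      Finset.sum_const, hcard, hSm]
    ring
  rcases hy with hy | hy
  · subst hy
    have hneg := grad_sym_val ℓ hd c hgs
    have hsum : (∑ i, ℓ (-1 * f i)) = (∑ i, ℓ (f i)) - c * (M * m) := by
      have : ∀ i : Fin M, ℓ (-1 * f i) = ℓ (f i) - c * f i := by
        intro i; rw [neg_one_mul]; exact hneg (f i)
      rw [Finset.sum_congr rfl (fun i _ => this i), Finset.sum_sub_distrib,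
        ← Finset.mul_sum, hSm]
    rw [show (-1 : ℝ) * m = -m by ring, hneg m, hsum, hBsum]
    field_simp
    ring
  · subst hy
    simp only [one_mul]
    rw [hBsum]
    field_simp
    ring
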